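/- Let p ≥ 2 be an integer and let α ∈ (0, p−2) be a real number that is not an integer. Then the function Ω(x)^α is not TN_p: there exist an integer 1 ≤ r ≤ p and strictly increasing real tuples x₁ < ⋯ < x_r and y₁ < ⋯ < y_r such that det (Ω(x_j − y_k)^α)_{j,k=1}^r < 0. -/

import Mathlib

open Matrix Set Filter

/-- Real power with the convention `0 ^ α := 0` (including `0 ^ 0 := 0`). -/
noncomputable def pow0 (x α : ℝ) : ℝ := if x = 0 then 0 else x ^ α

/-- Karlin's kernel `Ω(x) = x e^{-x}` for `x > 0`, else `0`. -/
noncomputable def Omega (x : ℝ) : ℝ := if 0 < x then x * Real.exp (-x) else 0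

/-! ### Auxiliary lemmas -/

/-- A finite set of naturals of cardinality `c` has sum at least `0 + 1 + ⋯ + (c-1)`. -/
private lemma sum_distinct_ge (S : Finset ℕ) : ∑ i ∈ Finset.range S.card, i ≤ ∑ i ∈ S, i := by
  induction' hc : S.card with c ih generalizing S
  · simp
  ·
    have hne : S.Nonempty := by rw [← Finset.card_pos, hc]; omega
    have hMmem : S.max' hne ∈ S := S.max'_mem hne
    have hcard : (S.erase (S.max' hne)).card = c := by
      rw [Finset.card_erase_of_mem hMmem, hc]; omega
    have hle : c ≤ S.max' hne := by
      have hsub : S ⊆ Finset.range (S.max' hne + 1) :=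
        fun a ha => Finset.mem_range.mpr (Nat.lt_succ_of_le (S.le_max' a ha))
      have := Finset.card_le_card hsub
      rw [hc, Finset.card_range] at this; omega
    calc ∑ i ∈ Finset.range (c + 1), i = (∑ i ∈ Finset.range c, i) + c :=
          Finset.sum_range_succ _ c
      _ ≤ (∑ i ∈ (S.erase (S.max' hne)), i) + S.max' hne :=
          add_le_add (by simpa [hcard] using ih _ hcard) hle
      _ = ∑ i ∈ S, i := Finset.sum_erase_add _ _ hMmem

/-- Weighted rearrangement: for strictly decreasing weights `m - k` and an injective
`r : Fin m → ℕ` different from the identity, the weighted sum strictly exceeds the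
identity's weighted sum. -/
private lemma rearrange {m : ℕ} (r : Fin m → ℕ) (hinj : Function.Injective r)
    (hne : r ≠ fun k : Fin m => (k : ℕ)) :
    (∑ k : Fin m, (m - (k : ℕ)) * (k : ℕ)) + 1 ≤ ∑ k : Fin m, (m - (k : ℕ)) * r k := by
  classical
  -- the prefix-sum decomposition
  have hdecomp : ∀ f : Fin m → ℕ, ∑ k : Fin m, (m - (k : ℕ)) * f k
      = ∑ s ∈ Finset.range m, ∑ k ∈ Finset.univ.filter (fun k : Fin m => (k : ℕ) ≤ s), f k := by
    intro f
    have h1 : ∀ k : Fin m, (m - (k : ℕ)) * f k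
        = ∑ s ∈ Finset.range m, if (k : ℕ) ≤ s then f k else 0 := by
      intro k
      rw [← Finset.sum_filter]
      have : (Finset.range m).filter (fun s => (k : ℕ) ≤ s) = Finset.Ico (k : ℕ) m := by
        ext s; simp [Finset.mem_filter, Finset.mem_range, Finset.mem_Ico, and_comm]
      rw [this, Finset.sum_const, Nat.card_Ico, smul_eq_mul]
    simp_rw [h1]
    rw [Finset.sum_comm]
    congr 1
    funext s
    rw [Finset.sum_filter]
  rw [hdecomp, hdecomp]
  -- per-prefix inequality for any injective function
  have hpre : ∀ s : ℕ, ∑ k ∈ Finset.univ.filter (fun k : Fin m => (k : ℕ) ≤ s), (k : ℕ)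
      ≤ ∑ k ∈ Finset.univ.filter (fun k : Fin m => (k : ℕ) ≤ s), r k := by
    intro s
    set F := Finset.univ.filter (fun k : Fin m => (k : ℕ) ≤ s) with hF
    have hinj' : Set.InjOn r F := fun a _ b _ h => hinj h
    have hval : Set.InjOn (fun k : Fin m => (k : ℕ)) F := fun a _ b _ h => Fin.val_injective h
    have h2 : ∑ k ∈ F, r k = ∑ j ∈ F.image r, j :=
      (Finset.sum_image (f := fun j => j) (fun a _ b _ h => hinj h)).symm
    have h3 : ∑ k ∈ F, (k : ℕ) = ∑ j ∈ F.image (fun k : Fin m => (k : ℕ)), j :=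
      (Finset.sum_image (f := fun j => j) (fun a _ b _ h => Fin.val_injective h)).symm
    have h4 : F.image (fun k : Fin m => (k : ℕ)) = Finset.range (F.image (fun k : Fin m => (k : ℕ))).card := by
      have himg : F.image (fun k : Fin m => (k : ℕ)) = Finset.range (min (s + 1) m) := by
        ext j
        simp only [Finset.mem_image, hF, Finset.mem_filter, Finset.mem_univ, true_and,
          Finset.mem_range, lt_min_iff]
        constructor
        · rintro ⟨k, hk, rfl⟩; exact ⟨Nat.lt_succ_of_le hk, k.isLt⟩
        · rintro ⟨h1', h2'⟩; exact ⟨⟨j, h2'⟩, Nat.lt_succ_iff.mp h1', rfl⟩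
      rw [himg, Finset.card_range]
    have hcards : (F.image r).card = (F.image (fun k : Fin m => (k : ℕ))).card := by
      rw [Finset.card_image_of_injOn hinj', Finset.card_image_of_injOn hval]
    calc ∑ k ∈ F, (k : ℕ) = ∑ j ∈ Finset.range (F.image (fun k : Fin m => (k : ℕ))).card, j := by
          rw [h3, ← h4]
      _ = ∑ j ∈ Finset.range (F.image r).card, j := by rw [hcards]
      _ ≤ ∑ j ∈ F.image r, j := sum_distinct_ge _
      _ = ∑ k ∈ F, r k := h2.symm
  -- the minimal place where `r` differs from the identity
  have hSne : (Finset.univ.filter (fun k : Fin m => r k ≠ (k : ℕ))).Nonempty := by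
    by_contra h
    rw [Finset.not_nonempty_iff_eq_empty, Finset.filter_eq_empty_iff] at h
    exact hne (funext fun k => by simpa using h (Finset.mem_univ k))
  set k0 : Fin m := (Finset.univ.filter (fun k : Fin m => r k ≠ (k : ℕ))).min' hSne with hk0
  have hk0mem : r k0 ≠ (k0 : ℕ) := by
    have := Finset.min'_mem _ hSne
    rw [← hk0] at this
    exact (Finset.mem_filter.mp this).2
  have hlt : ∀ k : Fin m, k < k0 → r k = (k : ℕ) := by
    intro k hk
    by_contra h
    have : k0 ≤ k :=
      (Finset.univ.filter (fun k : Fin m => r k ≠ (k : ℕ))).min'_le k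
        (Finset.mem_filter.mpr ⟨Finset.mem_univ _, h⟩)
    exact absurd hk (not_lt.mpr this)
  have hk0ge : (k0 : ℕ) + 1 ≤ r k0 := by
    rcases lt_or_gt_of_ne hk0mem with h | h
    · exfalso
      have hjm : r k0 < m := lt_trans h k0.isLt
      have h1 : r ⟨r k0, hjm⟩ = r k0 := hlt ⟨r k0, hjm⟩ (by rw [Fin.lt_def]; exact h)
      have h2 : (⟨r k0, hjm⟩ : Fin m) = k0 := hinj h1
      have h3 : ((⟨r k0, hjm⟩ : Fin m) : ℕ) = (k0 : ℕ) := congrArg Fin.val h2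
      exact hk0mem h3
    · omega
  -- strict inequality at the prefix s₀ = k0
  have hstrict : (∑ k ∈ Finset.univ.filter (fun k : Fin m => (k : ℕ) ≤ (k0 : ℕ)), (k : ℕ)) + 1
      ≤ ∑ k ∈ Finset.univ.filter (fun k : Fin m => (k : ℕ) ≤ (k0 : ℕ)), r k := by
    set F := Finset.univ.filter (fun k : Fin m => (k : ℕ) ≤ (k0 : ℕ)) with hF
    have hk0F : k0 ∈ F := by simp [hF]
    have herase : ∀ k ∈ F.erase k0, r k = (k : ℕ) := by
      intro k hk
      rcases Finset.mem_erase.mp hk with ⟨hne', hmem⟩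
      have hle' : (k : ℕ) ≤ (k0 : ℕ) := by
        rw [hF] at hmem
        simpa using hmem
      have hne'' : (k : ℕ) ≠ (k0 : ℕ) := fun hh => hne' (Fin.ext hh)
      exact hlt k (by rw [Fin.lt_def]; omega)
    have hs : ∑ k ∈ F.erase k0, (k : ℕ) = ∑ k ∈ F.erase k0, r k :=
      Finset.sum_congr rfl (fun k hk => (herase k hk).symm)
    calc (∑ k ∈ F, (k : ℕ)) + 1
        = ((∑ k ∈ F.erase k0, (k : ℕ)) + (k0 : ℕ)) + 1 := by
          rw [Finset.sum_erase_add _ _ hk0F]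
      _ ≤ (∑ k ∈ F.erase k0, r k) + r k0 := by rw [← hs]; omega
      _ = ∑ k ∈ F, r k := Finset.sum_erase_add _ _ hk0F
  -- combine
  have hk0r : (k0 : ℕ) ∈ Finset.range m := Finset.mem_range.mpr k0.isLt
  rw [← Finset.sum_erase_add _ _ hk0r, ← Finset.sum_erase_add _ _ hk0r]
  have hrest : ∑ s ∈ (Finset.range m).erase (k0 : ℕ),
      ∑ k ∈ Finset.univ.filter (fun k : Fin m => (k : ℕ) ≤ s), (k : ℕ)
      ≤ ∑ s ∈ (Finset.range m).erase (k0 : ℕ),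
      ∑ k ∈ Finset.univ.filter (fun k : Fin m => (k : ℕ) ≤ s), r k :=
    Finset.sum_le_sum fun s _ => hpre s
  rw [add_assoc]
  exact add_le_add hrest hstrict

/-- Crude bound for determinants with row-wise entry bounds. -/
private lemma det_bound {m : ℕ} (A : Matrix (Fin m) (Fin m) ℝ) (c : Fin m → ℝ)
    (h : ∀ i j, |A i j| ≤ c i) : |A.det| ≤ (m.factorial : ℝ) * ∏ i, c i := by
  rw [Matrix.det_apply]
  calc |∑ σ : Equiv.Perm (Fin m), Equiv.Perm.sign σ • ∏ i, A (σ i) i|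
      ≤ ∑ σ : Equiv.Perm (Fin m), |Equiv.Perm.sign σ • ∏ i, A (σ i) i| :=
        Finset.abs_sum_le_sum_abs _ _
    _ ≤ ∑ _σ : Equiv.Perm (Fin m), ∏ i, c i := by
        refine Finset.sum_le_sum fun σ _ => ?_
        have habs : |Equiv.Perm.sign σ • ∏ i, A (σ i) i| = |∏ i, A (σ i) i| := by
          rcases Int.units_eq_one_or (Equiv.Perm.sign σ) with h1 | h1 <;>
            simp [h1, Units.smul_def]
        rw [habs]
        calc |∏ i, A (σ i) i| = ∏ i, |A (σ i) i| := by rw [Finset.abs_prod]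
          _ ≤ ∏ i, c (σ i) :=
            Finset.prod_le_prod (fun _ _ => abs_nonneg _) (fun i _ => h (σ i) i)
          _ = ∏ i, c i := Equiv.prod_comp σ c
    _ = (m.factorial : ℝ) * ∏ i, c i := by
        rw [Finset.sum_const, Finset.card_univ, Fintype.card_perm, Fintype.card_fin,
          nsmul_eq_mul]


/-! ### Binomial-type expansion of `(X - Y) ^ β` with controlled remainder -/

/-- `pprod β i = β (β-1) ⋯ (β-i+1)`. -/
private noncomputable def pprod (β : ℝ) (i : ℕ) : ℝ := ∏ l ∈ Finset.range i, (β - l)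

/-- Generalized binomial coefficients (with alternating sign built in). -/
private noncomputable def bc (β : ℝ) (i : ℕ) : ℝ := (-1) ^ i * pprod β i / (i.factorial : ℝ)

private lemma pprod_succ' (β : ℝ) (i : ℕ) : pprod β (i + 1) = β * pprod (β - 1) i := by
  unfold pprod
  rw [Finset.prod_range_succ']
  have : ∀ l ∈ Finset.range i, (β - ((l + 1 : ℕ) : ℝ)) = (β - 1 - l) := by
    intro l _; push_cast; ring
  rw [Finset.prod_congr rfl this]
  simp [mul_comm]

private lemma bc_zero (β : ℝ) : bc β 0 = 1 := by simp [bc, pprod]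

private lemma bc_succ_mul (β : ℝ) (i : ℕ) :
    bc β (i + 1) * ((i : ℝ) + 1) = -(β * bc (β - 1) i) := by
  have hfac : ((i + 1).factorial : ℝ) = ((i : ℝ) + 1) * (i.factorial : ℝ) := by
    rw [Nat.factorial_succ]; push_cast; ring
  have h1 : (i.factorial : ℝ) ≠ 0 := Nat.cast_ne_zero.mpr (Nat.factorial_ne_zero i)
  have h2 : ((i : ℝ) + 1) ≠ 0 := by positivity
  rw [bc, bc, pprod_succ', hfac]
  field_simp
  ring

/-- The recursive constant controlling remainders. -/
private noncomputable def Cb (Q : ℝ) : ℕ → ℝ → ℝ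
  | 0, β => (2 : ℝ) ^ |β| * Q ^ |β|
  | (N + 1), β => |β| * Cb Q N (β - 1)

private lemma Cb_nonneg (Q : ℝ) (hQ : 0 ≤ Q) : ∀ N β, 0 ≤ Cb Q N β := by
  intro N
  induction N with
  | zero => intro β; exact mul_nonneg (Real.rpow_nonneg (by norm_num) _) (Real.rpow_nonneg hQ _)
  | succ N ih => intro β; exact mul_nonneg (abs_nonneg _) (ih _)

/-- Taylor expansion of `(X-Y)^β` in `Y` around `0`, with remainder bound, valid for
`1 ≤ X ≤ Q` and `0 ≤ Y ≤ 1/2`. -/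
private lemma rem_bound (Q : ℝ) (hQ : 1 ≤ Q) :
    ∀ (N : ℕ) (β X Y : ℝ), 1 ≤ X → X ≤ Q → 0 ≤ Y → Y ≤ 1 / 2 →
    |(X - Y) ^ β - ∑ i ∈ Finset.range N, bc β i * X ^ (β - (i : ℝ)) * Y ^ i|
      ≤ Cb Q N β * Y ^ N := by
  intro N
  induction N with
  | zero =>
    intro β X Y hX1 hXQ hY0 hY2
    simp only [Finset.range_zero, Finset.sum_empty, sub_zero, pow_zero, mul_one]
    have hXY : (1 : ℝ) / 2 ≤ X - Y := by linarith
    have hXYpos : (0 : ℝ) < X - Y := by linarith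
    have hXYQ : X - Y ≤ Q := by linarith
    rw [abs_of_nonneg (Real.rpow_nonneg hXYpos.le _)]
    show (X - Y) ^ β ≤ Cb Q 0 β
    show (X - Y) ^ β ≤ (2 : ℝ) ^ |β| * Q ^ |β|
    have hQb : (1 : ℝ) ≤ Q ^ |β| := by
      calc (1 : ℝ) = (1 : ℝ) ^ |β| := (Real.one_rpow _).symm
        _ ≤ Q ^ |β| := Real.rpow_le_rpow (by norm_num) hQ (abs_nonneg _)
    have h2b : (1 : ℝ) ≤ (2 : ℝ) ^ |β| := by
      calc (1 : ℝ) = (1 : ℝ) ^ |β| := (Real.one_rpow _).symm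
        _ ≤ (2 : ℝ) ^ |β| := Real.rpow_le_rpow (by norm_num) (by norm_num) (abs_nonneg _)
    rcases le_or_gt 0 β with hβ | hβ
    · have h1 : (X - Y) ^ β ≤ Q ^ β := Real.rpow_le_rpow hXYpos.le hXYQ hβ
      have h2 : Q ^ β = Q ^ |β| := by rw [abs_of_nonneg hβ]
      nlinarith [Real.rpow_nonneg (by linarith : (0:ℝ) ≤ Q) |β|]
    · have h1 : (X - Y) ^ β ≤ ((1 : ℝ) / 2) ^ β :=
        Real.rpow_le_rpow_of_nonpos (by norm_num) hXY hβ.le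
      have h2 : ((1 : ℝ) / 2) ^ β = (2 : ℝ) ^ |β| := by
        rw [abs_of_neg hβ, one_div, Real.inv_rpow (by norm_num), ← Real.rpow_neg (by norm_num)]
      nlinarith
  | succ N ih =>
    intro β X Y hX1 hXQ hY0 hY2
    set F : ℝ → ℝ := fun Z =>
      (X - Z) ^ β - ∑ i ∈ Finset.range (N + 1), bc β i * X ^ (β - (i : ℝ)) * Z ^ i with hF
    set G : ℝ → ℝ := fun Z =>
      (X - Z) ^ (β - 1) - ∑ i ∈ Finset.range N, bc (β - 1) i * X ^ (β - 1 - (i : ℝ)) * Z ^ i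
      with hG
    have hF0 : F 0 = 0 := by
      rw [hF]
      simp only [sub_zero]
      rw [Finset.sum_eq_single_of_mem 0 (Finset.mem_range.mpr (Nat.succ_pos N))]
      · rw [bc_zero]
        simp
      · intro i _ hi
        simp [zero_pow hi]
    have hderiv : ∀ Z ∈ Icc (0 : ℝ) Y, HasDerivWithinAt F (-β * G Z) (Icc (0 : ℝ) Y) Z := by
      intro Z hZ
      rcases hZ with ⟨hZ0, hZY⟩
      have hXZ : X - Z ≠ 0 := by
        have : (1 : ℝ) / 2 ≤ X - Z := by linarith
        linarith
      have h1 : HasDerivAt (fun Z : ℝ => X - Z) (-1) Z := by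
        simpa using (hasDerivAt_id Z).const_sub X
      have h2 : HasDerivAt (fun Z : ℝ => (X - Z) ^ β) (-1 * β * (X - Z) ^ (β - 1)) Z :=
        h1.rpow_const (Or.inl hXZ)
      have h3 : HasDerivAt (fun Z : ℝ => ∑ i ∈ Finset.range (N + 1),
          bc β i * X ^ (β - (i : ℝ)) * Z ^ i)
          (∑ i ∈ Finset.range (N + 1),
            bc β i * X ^ (β - (i : ℝ)) * ((i : ℝ) * Z ^ (i - 1))) Z := by
        apply HasDerivAt.fun_sum
        intro i _
        exact (hasDerivAt_pow i Z).const_mul _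
      have h4 : HasDerivAt F (-1 * β * (X - Z) ^ (β - 1) - ∑ i ∈ Finset.range (N + 1),
          bc β i * X ^ (β - (i : ℝ)) * ((i : ℝ) * Z ^ (i - 1))) Z := h2.sub h3
      have hsum : ∑ i ∈ Finset.range (N + 1),
          bc β i * X ^ (β - (i : ℝ)) * ((i : ℝ) * Z ^ (i - 1))
          = -β * ∑ i ∈ Finset.range N, bc (β - 1) i * X ^ (β - 1 - (i : ℝ)) * Z ^ i := by
        rw [Finset.sum_range_succ']
        simp only [Nat.cast_zero, zero_mul, mul_zero, add_zero]
        rw [Finset.mul_sum]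
        apply Finset.sum_congr rfl
        intro i _
        have hexp : β - ((i + 1 : ℕ) : ℝ) = β - 1 - (i : ℝ) := by push_cast; ring
        have hbc := bc_succ_mul β i
        rw [hexp]
        have : ((i + 1 : ℕ) : ℝ) * Z ^ (i + 1 - 1) = ((i : ℝ) + 1) * Z ^ i := by
          push_cast; ring_nf
        rw [this]
        linear_combination (X ^ (β - 1 - (i : ℝ)) * Z ^ i) * hbc
      have : -1 * β * (X - Z) ^ (β - 1) - ∑ i ∈ Finset.range (N + 1),
          bc β i * X ^ (β - (i : ℝ)) * ((i : ℝ) * Z ^ (i - 1)) = -β * G Z := by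
        rw [hsum, hG]
        ring
      rw [this] at h4
      exact h4.hasDerivWithinAt
    have hbound : ∀ Z ∈ Icc (0 : ℝ) Y, ‖-β * G Z‖ ≤ |β| * (Cb Q N (β - 1) * Y ^ N) := by
      intro Z hZ
      rcases hZ with ⟨hZ0, hZY⟩
      rw [Real.norm_eq_abs, abs_mul, abs_neg]
      apply mul_le_mul_of_nonneg_left _ (abs_nonneg β)
      calc |G Z| ≤ Cb Q N (β - 1) * Z ^ N := ih (β - 1) X Z hX1 hXQ hZ0 (by linarith)
        _ ≤ Cb Q N (β - 1) * Y ^ N :=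
          mul_le_mul_of_nonneg_left (pow_le_pow_left₀ hZ0 hZY N)
            (Cb_nonneg Q (by linarith) N _)
    have hmvt := Convex.norm_image_sub_le_of_norm_hasDerivWithin_le hderiv hbound
      (convex_Icc 0 Y) (Set.left_mem_Icc.mpr hY0) (Set.right_mem_Icc.mpr hY0)
    rw [hF0, sub_zero, sub_zero, Real.norm_eq_abs, Real.norm_eq_abs] at hmvt
    calc |F Y| ≤ |β| * (Cb Q N (β - 1) * Y ^ N) * |Y| := hmvt
      _ = Cb Q (N + 1) β * Y ^ (N + 1) := by
        rw [abs_of_nonneg hY0]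
        show |β| * (Cb Q N (β - 1) * Y ^ N) * Y = |β| * Cb Q N (β - 1) * Y ^ (N + 1)
        ring


/-! ### The specific construction -/

/-- Row points `x_j = 2^j`. -/
private noncomputable def xv (m : ℕ) (j : Fin m) : ℝ := 2 ^ (j : ℕ)

/-- Column points `y_k = ε^(m-k)`. -/
private noncomputable def yv (ε : ℝ) (m : ℕ) (k : Fin m) : ℝ := ε ^ (m - (k : ℕ))

/-- Vandermonde nodes `2^(α-i)`. -/
private noncomputable def vvf (α : ℝ) (i : ℕ) : ℝ := (2 : ℝ) ^ (α - (i : ℝ))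

/-- The pieces of each row of the matrix: Taylor terms and the final remainder. -/
private noncomputable def gf (α ε : ℝ) (m D : ℕ) (k : Fin m) (i : ℕ) : Fin m → ℝ :=
  if i ≤ D then fun j => (bc α i * yv ε m k ^ i) * vvf α i ^ (j : ℕ)
  else fun j => (xv m j - yv ε m k) ^ α
    - ∑ i' ∈ Finset.range (D + 1), bc α i' * xv m j ^ (α - (i' : ℝ)) * yv ε m k ^ i'

/-- The global constant for entry bounds. -/
private noncomputable def CCc (α : ℝ) (m D : ℕ) : ℝ :=
  (∑ i ∈ Finset.range (D + 1), |bc α i|) * ((2 : ℝ) ^ (α : ℝ) + 1) ^ m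
    + Cb ((2 : ℝ) ^ (m - 1)) (D + 1) α + 1

private lemma xw (α : ℝ) (m : ℕ) (i : ℕ) (j : Fin m) :
    xv m j ^ (α - (i : ℝ)) = vvf α i ^ (j : ℕ) := by
  rw [xv, vvf, ← Real.rpow_natCast 2 (j : ℕ),
    ← Real.rpow_natCast ((2 : ℝ) ^ (α - (i : ℝ))) (j : ℕ),
    ← Real.rpow_mul (by norm_num), ← Real.rpow_mul (by norm_num), mul_comm]

private lemma gf_rowsum (α ε : ℝ) (m D : ℕ) (k : Fin m) :
    (fun j : Fin m => (xv m j - yv ε m k) ^ α) = ∑ i ∈ Finset.range (D + 2), gf α ε m D k i := by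
  funext j
  rw [Finset.sum_apply, Finset.sum_range_succ]
  have h1 : ∀ i ∈ Finset.range (D + 1),
      gf α ε m D k i j = bc α i * xv m j ^ (α - (i : ℝ)) * yv ε m k ^ i := by
    intro i hi
    rw [Finset.mem_range] at hi
    rw [gf, if_pos (by omega)]
    rw [← xw α m i j]
    ring
  have h2 : gf α ε m D k (D + 1) j = (xv m j - yv ε m k) ^ α
      - ∑ i' ∈ Finset.range (D + 1), bc α i' * xv m j ^ (α - (i' : ℝ)) * yv ε m k ^ i' := by
    rw [gf, if_neg (by omega)]
  rw [Finset.sum_congr rfl h1, h2]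
  ring

private lemma det_expand (α ε : ℝ) (m D : ℕ) :
    (Matrix.of fun k j : Fin m => (xv m j - yv ε m k) ^ α).det
      = ∑ r ∈ Fintype.piFinset (fun _ : Fin m => Finset.range (D + 2)),
          (Matrix.of fun k j => gf α ε m D k (r k) j).det := by
  have h1 : (Matrix.of fun k j : Fin m => (xv m j - yv ε m k) ^ α)
      = Matrix.of (fun k => ∑ i ∈ Finset.range (D + 2), gf α ε m D k i) := by
    ext k j
    have := congrFun (gf_rowsum α ε m D k) j
    simpa using this
  rw [h1]
  exact (Matrix.detRowAlternating (R := ℝ) (n := Fin m)).toMultilinearMap.map_sum_finset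
    (fun k i => gf α ε m D k i) (fun _ => Finset.range (D + 2))


private lemma main_term (α ε : ℝ) (m D : ℕ) (hkD : ∀ k : Fin m, (k : ℕ) ≤ D)
    (hDsum : D = ∑ k ∈ Finset.range m, (m - k) * k) :
    (Matrix.of fun k j : Fin m => gf α ε m D k ((k : ℕ)) j).det
      = ((∏ k : Fin m, (pprod α (k : ℕ) / ((k : ℕ).factorial : ℝ))) *
          ∏ i : Fin m, ∏ j ∈ Finset.Ioi i, (vvf α (i : ℕ) - vvf α (j : ℕ))) * ε ^ D := by
  have h2 : (Matrix.of fun k j : Fin m => gf α ε m D k (k : ℕ) j)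
      = Matrix.of fun k j : Fin m => (bc α (k : ℕ) * yv ε m k ^ (k : ℕ)) *
          (Matrix.vandermonde fun k : Fin m => vvf α (k : ℕ)) k j := by
    ext k j
    rw [Matrix.of_apply, Matrix.of_apply, gf, if_pos (hkD k)]
    rfl
  rw [h2, Matrix.det_mul_column, Matrix.det_vandermonde]
  have hD' : (∑ k : Fin m, (m - (k : ℕ)) * (k : ℕ)) = D := by
    rw [hDsum]; exact Fin.sum_univ_eq_sum_range (fun k => (m - k) * k) m
  have hA : ∏ k : Fin m, (bc α (k : ℕ) * yv ε m k ^ (k : ℕ))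
      = ((-1 : ℝ) ^ (∑ k : Fin m, (k : ℕ)) *
          ∏ k : Fin m, (pprod α (k : ℕ) / ((k : ℕ).factorial : ℝ))) * ε ^ D := by
    have hbc : ∀ k : Fin m, bc α (k : ℕ) * yv ε m k ^ (k : ℕ)
        = ((-1 : ℝ) ^ (k : ℕ) * (pprod α (k : ℕ) / ((k : ℕ).factorial : ℝ)))
            * ε ^ ((m - (k : ℕ)) * (k : ℕ)) := by
      intro k
      rw [bc, yv, ← pow_mul]
      ring
    calc ∏ k : Fin m, (bc α (k : ℕ) * yv ε m k ^ (k : ℕ))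
        = ∏ k : Fin m, (((-1 : ℝ) ^ (k : ℕ) * (pprod α (k : ℕ) / ((k : ℕ).factorial : ℝ)))
            * ε ^ ((m - (k : ℕ)) * (k : ℕ))) := Finset.prod_congr rfl fun k _ => hbc k
      _ = (∏ k : Fin m, ((-1 : ℝ) ^ (k : ℕ) * (pprod α (k : ℕ) / ((k : ℕ).factorial : ℝ))))
            * ∏ k : Fin m, ε ^ ((m - (k : ℕ)) * (k : ℕ)) := Finset.prod_mul_distrib
      _ = ((-1 : ℝ) ^ (∑ k : Fin m, (k : ℕ)) *
            ∏ k : Fin m, (pprod α (k : ℕ) / ((k : ℕ).factorial : ℝ)))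
            * ε ^ (∑ k : Fin m, (m - (k : ℕ)) * (k : ℕ)) := by
          rw [Finset.prod_mul_distrib, Finset.prod_pow_eq_pow_sum,
            Finset.prod_pow_eq_pow_sum]
      _ = ((-1 : ℝ) ^ (∑ k : Fin m, (k : ℕ)) *
            ∏ k : Fin m, (pprod α (k : ℕ) / ((k : ℕ).factorial : ℝ))) * ε ^ D := by
          rw [hD']
  have hB : (∏ i : Fin m, ∏ j ∈ Finset.Ioi i, (vvf α (j : ℕ) - vvf α (i : ℕ)))
      = (-1 : ℝ) ^ (∑ k : Fin m, (k : ℕ)) *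
          ∏ i : Fin m, ∏ j ∈ Finset.Ioi i, (vvf α (i : ℕ) - vvf α (j : ℕ)) := by
    have h3 : ∀ i : Fin m, ∏ j ∈ Finset.Ioi i, (vvf α (j : ℕ) - vvf α (i : ℕ))
        = (-1 : ℝ) ^ (Finset.Ioi i).card * ∏ j ∈ Finset.Ioi i, (vvf α (i : ℕ) - vvf α (j : ℕ)) := by
      intro i
      rw [← Finset.prod_const, ← Finset.prod_mul_distrib]
      exact Finset.prod_congr rfl fun j _ => by ring
    rw [Finset.prod_congr rfl fun i _ => h3 i, Finset.prod_mul_distrib,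
      Finset.prod_pow_eq_pow_sum]
    congr 2
    have h4 : ∀ i : Fin m, (Finset.Ioi i).card = m - 1 - (i : ℕ) := fun i => Fin.card_Ioi i
    rw [Finset.sum_congr rfl fun i _ => h4 i,
      Fin.sum_univ_eq_sum_range (fun i => m - 1 - i) m,
      Fin.sum_univ_eq_sum_range (fun i => i) m]
    exact Finset.sum_range_reflect (fun i => i) m
  rw [hA, hB]
  have hKK : (-1 : ℝ) ^ (∑ k : Fin m, (k : ℕ)) * (-1 : ℝ) ^ (∑ k : Fin m, (k : ℕ)) = 1 := by
    rw [← pow_add]; exact Even.neg_one_pow (Even.add_self _)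
  calc ((-1 : ℝ) ^ (∑ k : Fin m, (k : ℕ)) *
          ∏ k : Fin m, (pprod α (k : ℕ) / ((k : ℕ).factorial : ℝ))) * ε ^ D *
        ((-1 : ℝ) ^ (∑ k : Fin m, (k : ℕ)) *
          ∏ i : Fin m, ∏ j ∈ Finset.Ioi i, (vvf α (i : ℕ) - vvf α (j : ℕ)))
      = ((-1 : ℝ) ^ (∑ k : Fin m, (k : ℕ)) * (-1 : ℝ) ^ (∑ k : Fin m, (k : ℕ))) *
        (((∏ k : Fin m, (pprod α (k : ℕ) / ((k : ℕ).factorial : ℝ))) *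
          ∏ i : Fin m, ∏ j ∈ Finset.Ioi i, (vvf α (i : ℕ) - vvf α (j : ℕ))) * ε ^ D) := by ring
    _ = ((∏ k : Fin m, (pprod α (k : ℕ) / ((k : ℕ).factorial : ℝ))) *
          ∏ i : Fin m, ∏ j ∈ Finset.Ioi i, (vvf α (i : ℕ) - vvf α (j : ℕ))) * ε ^ D := by
        rw [hKK, one_mul]


private lemma CCc_one_le (α : ℝ) (m D : ℕ) : 1 ≤ CCc α m D := by
  rw [CCc]
  have h1 : 0 ≤ ∑ i ∈ Finset.range (D + 1), |bc α i| := Finset.sum_nonneg fun _ _ => abs_nonneg _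
  have h2 : (0 : ℝ) ≤ ((2 : ℝ) ^ (α : ℝ) + 1) ^ m := by positivity
  have h3 : 0 ≤ Cb ((2 : ℝ) ^ (m - 1)) (D + 1) α := Cb_nonneg _ (by positivity) _ _
  nlinarith [mul_nonneg h1 h2]

private lemma ent_bound (α ε : ℝ) (m D : ℕ) (hε0 : 0 < ε) (hε2 : ε ≤ 1 / 2)
    (k : Fin m) (i : ℕ) (hi : i ≤ D + 1) (j : Fin m) :
    |gf α ε m D k i j| ≤ CCc α m D * ε ^ ((m - (k : ℕ)) * i) := by
  have hε1 : ε ≤ 1 := by linarith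
  have hy0 : 0 < yv ε m k := pow_pos hε0 _
  have hyε : yv ε m k ≤ ε := pow_le_of_le_one hε0.le hε1 (by have := k.isLt; omega)
  have hy2 : yv ε m k ≤ 1 / 2 := le_trans hyε hε2
  have hx1 : 1 ≤ xv m j := one_le_pow₀ one_le_two
  have hxQ : xv m j ≤ (2 : ℝ) ^ (m - 1) :=
    pow_le_pow_right₀ one_le_two (by have := j.isLt; omega)
  have hyp : yv ε m k ^ i = ε ^ ((m - (k : ℕ)) * i) := by rw [yv, ← pow_mul]
  have hBb0 : 0 ≤ ∑ i' ∈ Finset.range (D + 1), |bc α i'| :=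
    Finset.sum_nonneg fun _ _ => abs_nonneg _
  have hWb0 : (0 : ℝ) ≤ ((2 : ℝ) ^ (α : ℝ) + 1) ^ m := by positivity
  have hCb0 : 0 ≤ Cb ((2 : ℝ) ^ (m - 1)) (D + 1) α := Cb_nonneg _ (by positivity) _ _
  have hεe : (0 : ℝ) ≤ ε ^ ((m - (k : ℕ)) * i) := by positivity
  by_cases hiD : i ≤ D
  · rw [gf, if_pos hiD]
    have e1 : |bc α i| ≤ ∑ i' ∈ Finset.range (D + 1), |bc α i'| :=
      Finset.single_le_sum (f := fun i' => |bc α i'|) (fun _ _ => abs_nonneg _)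
        (Finset.mem_range.mpr (by omega))
    have hvv0 : 0 < vvf α i := Real.rpow_pos_of_pos two_pos _
    have h2α : (0 : ℝ) < (2 : ℝ) ^ (α : ℝ) := Real.rpow_pos_of_pos two_pos _
    have e2 : vvf α i ^ (j : ℕ) ≤ ((2 : ℝ) ^ (α : ℝ) + 1) ^ m := by
      calc vvf α i ^ (j : ℕ) ≤ ((2 : ℝ) ^ (α : ℝ) + 1) ^ (j : ℕ) := by
            apply pow_le_pow_left₀ hvv0.le
            calc vvf α i ≤ (2 : ℝ) ^ (α : ℝ) :=
                  Real.rpow_le_rpow_of_exponent_le one_le_two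
                    (sub_le_self α (Nat.cast_nonneg i))
              _ ≤ (2 : ℝ) ^ (α : ℝ) + 1 := by linarith
        _ ≤ ((2 : ℝ) ^ (α : ℝ) + 1) ^ m := by
            apply pow_le_pow_right₀ (by linarith) (by have := j.isLt; omega)
    calc |(bc α i * yv ε m k ^ i) * vvf α i ^ (j : ℕ)|
        = |bc α i| * yv ε m k ^ i * vvf α i ^ (j : ℕ) := by
          rw [abs_mul, abs_mul, abs_of_nonneg (pow_nonneg hy0.le i),
            abs_of_nonneg (pow_nonneg hvv0.le _)]
      _ ≤ (∑ i' ∈ Finset.range (D + 1), |bc α i'|) * yv ε m k ^ i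
            * ((2 : ℝ) ^ (α : ℝ) + 1) ^ m := by
          gcongr
      _ = ((∑ i' ∈ Finset.range (D + 1), |bc α i'|) * ((2 : ℝ) ^ (α : ℝ) + 1) ^ m)
            * ε ^ ((m - (k : ℕ)) * i) := by rw [hyp]; ring
      _ ≤ CCc α m D * ε ^ ((m - (k : ℕ)) * i) := by
          apply mul_le_mul_of_nonneg_right _ hεe
          rw [CCc]; linarith
  · have hiD1 : i = D + 1 := by omega
    subst hiD1
    rw [gf, if_neg (by omega)]
    have hrem := rem_bound ((2 : ℝ) ^ (m - 1)) (one_le_pow₀ one_le_two) (D + 1) α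
      (xv m j) (yv ε m k) hx1 hxQ hy0.le hy2
    calc |(xv m j - yv ε m k) ^ α - ∑ i' ∈ Finset.range (D + 1),
            bc α i' * xv m j ^ (α - (i' : ℝ)) * yv ε m k ^ i'|
        ≤ Cb ((2 : ℝ) ^ (m - 1)) (D + 1) α * yv ε m k ^ (D + 1) := hrem
      _ = Cb ((2 : ℝ) ^ (m - 1)) (D + 1) α * ε ^ ((m - (k : ℕ)) * (D + 1)) := by rw [hyp]
      _ ≤ CCc α m D * ε ^ ((m - (k : ℕ)) * (D + 1)) := by
          apply mul_le_mul_of_nonneg_right _ (by positivity)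
          rw [CCc]
          nlinarith [mul_nonneg hBb0 hWb0]

private lemma offmain_bound (α ε : ℝ) (m D : ℕ) (hε0 : 0 < ε) (hε2 : ε ≤ 1 / 2)
    (hDsum : D = ∑ k ∈ Finset.range m, (m - k) * k)
    (r : Fin m → ℕ) (hr : ∀ k, r k < D + 2) (hrne : r ≠ fun k : Fin m => (k : ℕ)) :
    |(Matrix.of fun k j : Fin m => gf α ε m D k (r k) j).det|
      ≤ (m.factorial : ℝ) * CCc α m D ^ m * ε ^ (D + 1) := by
  have hCC1 : 1 ≤ CCc α m D := CCc_one_le α m D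
  have hCC0 : (0 : ℝ) ≤ CCc α m D := by linarith
  have hbase : (0 : ℝ) ≤ (m.factorial : ℝ) * CCc α m D ^ m * ε ^ (D + 1) := by positivity
  have tail : (D + 1 ≤ ∑ k : Fin m, (m - (k : ℕ)) * r k) →
      |(Matrix.of fun k j : Fin m => gf α ε m D k (r k) j).det|
        ≤ (m.factorial : ℝ) * CCc α m D ^ m * ε ^ (D + 1) := by
    intro hsum
    have hent : ∀ k j : Fin m, |(Matrix.of fun k j : Fin m => gf α ε m D k (r k) j) k j|
        ≤ CCc α m D * ε ^ ((m - (k : ℕ)) * r k) := fun k j =>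
      ent_bound α ε m D hε0 hε2 k (r k) (by have := hr k; omega) j
    have h1 := det_bound _ (fun k => CCc α m D * ε ^ ((m - (k : ℕ)) * r k)) hent
    have h2 : ∏ k : Fin m, (CCc α m D * ε ^ ((m - (k : ℕ)) * r k))
        = CCc α m D ^ m * ε ^ (∑ k : Fin m, (m - (k : ℕ)) * r k) := by
      rw [Finset.prod_mul_distrib, Finset.prod_const, Finset.card_univ, Fintype.card_fin,
        Finset.prod_pow_eq_pow_sum]
    have h3 : ε ^ (∑ k : Fin m, (m - (k : ℕ)) * r k) ≤ ε ^ (D + 1) :=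
      pow_le_pow_of_le_one hε0.le (by linarith) hsum
    calc |(Matrix.of fun k j : Fin m => gf α ε m D k (r k) j).det|
        ≤ (m.factorial : ℝ) * ∏ k : Fin m, (CCc α m D * ε ^ ((m - (k : ℕ)) * r k)) := h1
      _ = (m.factorial : ℝ) * (CCc α m D ^ m * ε ^ (∑ k : Fin m, (m - (k : ℕ)) * r k)) := by
          rw [h2]
      _ ≤ (m.factorial : ℝ) * (CCc α m D ^ m * ε ^ (D + 1)) := by
          apply mul_le_mul_of_nonneg_left _ (Nat.cast_nonneg _)
          exact mul_le_mul_of_nonneg_left h3 (by positivity)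
      _ = (m.factorial : ℝ) * CCc α m D ^ m * ε ^ (D + 1) := by ring
  by_cases hcap : ∀ k, r k ≤ D
  · by_cases hinj : Function.Injective r
    · apply tail
      have h5 := rearrange r hinj hrne
      have hD' : (∑ k : Fin m, (m - (k : ℕ)) * (k : ℕ)) = D := by
        rw [hDsum]; exact Fin.sum_univ_eq_sum_range (fun k => (m - k) * k) m
      omega
    · rw [Function.not_injective_iff] at hinj
      obtain ⟨k1, k2, hk12, hne12⟩ := hinj
      have h2 : (Matrix.of fun k j : Fin m => gf α ε m D k (r k) j)
          = Matrix.of fun k j : Fin m => (bc α (r k) * yv ε m k ^ (r k)) *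
              (Matrix.vandermonde fun k : Fin m => vvf α (r k)) k j := by
        ext k j
        rw [Matrix.of_apply, Matrix.of_apply, gf, if_pos (hcap k)]
        rfl
      rw [h2, Matrix.det_mul_column]
      have h3 : (Matrix.vandermonde fun k : Fin m => vvf α (r k)).det = 0 := by
        apply Matrix.det_zero_of_row_eq hne12
        funext j
        show vvf α (r k1) ^ (j : ℕ) = vvf α (r k2) ^ (j : ℕ)
        rw [hk12]
      rw [h3, mul_zero, abs_zero]
      exact hbase
  · apply tail
    push_neg at hcap
    obtain ⟨k0, hk0⟩ := hcap
    have hk0' : r k0 = D + 1 := by have := hr k0; omega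
    have h6 : (m - (k0 : ℕ)) * r k0 ≤ ∑ k : Fin m, (m - (k : ℕ)) * r k :=
      Finset.single_le_sum (f := fun k : Fin m => (m - (k : ℕ)) * r k)
        (fun _ _ => Nat.zero_le _) (Finset.mem_univ k0)
    have h7 : 1 ≤ m - (k0 : ℕ) := by have := k0.isLt; omega
    have h8 : D + 1 ≤ (m - (k0 : ℕ)) * r k0 := by
      rw [hk0']
      exact Nat.le_mul_of_pos_left (D + 1) (by omega)
    omega


private lemma key2 (n : ℕ) (hn : 1 ≤ n) (α : ℝ) (hα1 : (n : ℝ) - 1 < α) (hα2 : α < n) :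
    ∃ ε : ℝ, 0 < ε ∧ ε ≤ 1 / 2 ∧
      (Matrix.of fun k j : Fin (n + 2) => (xv (n + 2) j - yv ε (n + 2) k) ^ α).det < 0 := by
  classical
  set m := n + 2 with hm
  set D : ℕ := ∑ k ∈ Finset.range m, (m - k) * k with hD
  have hm1D : m - 1 ≤ D := by
    have h1 : (m - 1) * 1 ≤ D := by
      rw [hD]
      exact Finset.single_le_sum (f := fun k => (m - k) * k) (fun _ _ => Nat.zero_le _)
        (Finset.mem_range.mpr (by omega))
    omega
  have hkD : ∀ k : Fin m, (k : ℕ) ≤ D := fun k => by have := k.isLt; omega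
  have hppos : ∀ k : ℕ, k ≤ n → 0 < pprod α k := by
    intro k hk
    rw [pprod]
    apply Finset.prod_pos
    intro l hl
    rw [Finset.mem_range] at hl
    have hl1 : l + 1 ≤ n := by omega
    have hln : ((l : ℝ) + 1) ≤ (n : ℝ) := by exact_mod_cast hl1
    linarith
  have hS0 : (∏ k : Fin m, (pprod α (k : ℕ) / ((k : ℕ).factorial : ℝ))) < 0 := by
    rw [hm, Fin.prod_univ_castSucc]
    apply mul_neg_of_pos_of_neg
    · apply Finset.prod_pos
      intro k _
      apply div_pos
      · apply hppos
        have := k.isLt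
        simp only [Fin.coe_castSucc]
        omega
      · exact_mod_cast Nat.cast_pos.mpr (Nat.factorial_pos _)
    · have hlast : ((Fin.last (n + 1) : Fin (n + 2)) : ℕ) = n + 1 := rfl
      rw [hlast]
      apply div_neg_of_neg_of_pos
      · have hpn : (0 : ℝ) < ∏ l ∈ Finset.range n, (α - (l : ℝ)) := hppos n le_rfl
        rw [pprod, Finset.prod_range_succ]
        apply mul_neg_of_pos_of_neg hpn
        rw [sub_neg]
        exact hα2
      · exact_mod_cast Nat.cast_pos.mpr (Nat.factorial_pos _)
  have hV0 : (0 : ℝ) < ∏ i : Fin m, ∏ j ∈ Finset.Ioi i, (vvf α (i : ℕ) - vvf α (j : ℕ)) := by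
    apply Finset.prod_pos; intro i _
    apply Finset.prod_pos; intro j hj
    have hij : i < j := Finset.mem_Ioi.mp hj
    rw [vvf, vvf, sub_pos]
    apply (Real.rpow_lt_rpow_left_iff one_lt_two).mpr
    have hij' : (i : ℕ) < (j : ℕ) := hij
    have : ((i : ℕ) : ℝ) < ((j : ℕ) : ℝ) := by exact_mod_cast hij'
    linarith
  set c₀ : ℝ := (∏ k : Fin m, (pprod α (k : ℕ) / ((k : ℕ).factorial : ℝ))) *
    ∏ i : Fin m, ∏ j ∈ Finset.Ioi i, (vvf α (i : ℕ) - vvf α (j : ℕ)) with hc₀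
  have hc₀0 : c₀ < 0 := mul_neg_of_neg_of_pos hS0 hV0
  have hCC0 : (0 : ℝ) < CCc α m D := lt_of_lt_of_le one_pos (CCc_one_le α m D)
  set CT : ℝ := (((D + 2) ^ m : ℕ) : ℝ) * ((m.factorial : ℝ) * CCc α m D ^ m) with hCT
  have hCT0 : 0 ≤ CT := by
    apply mul_nonneg (Nat.cast_nonneg _)
    exact mul_nonneg (Nat.cast_nonneg _) (pow_nonneg hCC0.le m)
  have hmain : ∀ ε : ℝ, 0 < ε → ε ≤ 1 / 2 →
      (Matrix.of fun k j : Fin m => (xv m j - yv ε m k) ^ α).det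
        ≤ c₀ * ε ^ D + CT * ε ^ (D + 1) := by
    intro ε hε0 hε2
    have hr₀mem : (fun k : Fin m => (k : ℕ)) ∈
        Fintype.piFinset (fun _ : Fin m => Finset.range (D + 2)) := by
      rw [Fintype.mem_piFinset]
      intro k
      rw [Finset.mem_range]
      have := hkD k; omega
    rw [det_expand α ε m D, ← Finset.sum_erase_add _ _ hr₀mem]
    have hmt : (Matrix.of fun k j : Fin m =>
        gf α ε m D k ((fun k : Fin m => (k : ℕ)) k) j).det = c₀ * ε ^ D := by
      rw [hc₀]
      exact main_term α ε m D hkD hD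
    have hrest : |∑ r ∈ (Fintype.piFinset (fun _ : Fin m => Finset.range (D + 2))).erase
          (fun k : Fin m => (k : ℕ)),
          (Matrix.of fun k j : Fin m => gf α ε m D k (r k) j).det|
        ≤ CT * ε ^ (D + 1) := by
      have hstep : ∀ r ∈ (Fintype.piFinset (fun _ : Fin m => Finset.range (D + 2))).erase
          (fun k : Fin m => (k : ℕ)),
          |(Matrix.of fun k j : Fin m => gf α ε m D k (r k) j).det|
            ≤ (m.factorial : ℝ) * CCc α m D ^ m * ε ^ (D + 1) := by
        intro r hrmem
        have h1 : r ∈ Fintype.piFinset (fun _ : Fin m => Finset.range (D + 2)) :=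
          Finset.mem_of_mem_erase hrmem
        have h2 : r ≠ fun k : Fin m => (k : ℕ) := Finset.ne_of_mem_erase hrmem
        exact offmain_bound α ε m D hε0 hε2 hD r
          (fun k => Finset.mem_range.mp ((Fintype.mem_piFinset.mp h1) k)) h2
      calc |∑ r ∈ (Fintype.piFinset (fun _ : Fin m => Finset.range (D + 2))).erase
            (fun k : Fin m => (k : ℕ)),
            (Matrix.of fun k j : Fin m => gf α ε m D k (r k) j).det|
          ≤ ∑ r ∈ (Fintype.piFinset (fun _ : Fin m => Finset.range (D + 2))).erase
            (fun k : Fin m => (k : ℕ)),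
            |(Matrix.of fun k j : Fin m => gf α ε m D k (r k) j).det| :=
            Finset.abs_sum_le_sum_abs _ _
        _ ≤ ∑ _r ∈ (Fintype.piFinset (fun _ : Fin m => Finset.range (D + 2))).erase
            (fun k : Fin m => (k : ℕ)),
            ((m.factorial : ℝ) * CCc α m D ^ m * ε ^ (D + 1)) :=
            Finset.sum_le_sum hstep
        _ = (((Fintype.piFinset (fun _ : Fin m => Finset.range (D + 2))).erase
            (fun k : Fin m => (k : ℕ))).card : ℝ) *
            ((m.factorial : ℝ) * CCc α m D ^ m * ε ^ (D + 1)) := by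
            rw [Finset.sum_const, nsmul_eq_mul]
        _ ≤ CT * ε ^ (D + 1) := by
            have hcard : (((Fintype.piFinset (fun _ : Fin m => Finset.range (D + 2))).erase
                (fun k : Fin m => (k : ℕ))).card : ℝ) ≤ (((D + 2) ^ m : ℕ) : ℝ) := by
              have h3 : ((Fintype.piFinset (fun _ : Fin m => Finset.range (D + 2))).erase
                  (fun k : Fin m => (k : ℕ))).card
                  ≤ (Fintype.piFinset (fun _ : Fin m => Finset.range (D + 2))).card :=
                Finset.card_erase_le
              have h4 : (Fintype.piFinset (fun _ : Fin m => Finset.range (D + 2))).card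
                  = (D + 2) ^ m := by
                rw [Fintype.card_piFinset]; simp
              exact_mod_cast h3.trans_eq h4
            calc (((Fintype.piFinset (fun _ : Fin m => Finset.range (D + 2))).erase
                (fun k : Fin m => (k : ℕ))).card : ℝ) *
                ((m.factorial : ℝ) * CCc α m D ^ m * ε ^ (D + 1))
                ≤ (((D + 2) ^ m : ℕ) : ℝ) *
                  ((m.factorial : ℝ) * CCc α m D ^ m * ε ^ (D + 1)) := by
                  apply mul_le_mul_of_nonneg_right hcard
                  positivity
              _ = CT * ε ^ (D + 1) := by rw [hCT]; ring
    calc (∑ r ∈ (Fintype.piFinset (fun _ : Fin m => Finset.range (D + 2))).erase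
          (fun k : Fin m => (k : ℕ)),
          (Matrix.of fun k j : Fin m => gf α ε m D k (r k) j).det)
          + (Matrix.of fun k j : Fin m =>
              gf α ε m D k ((fun k : Fin m => (k : ℕ)) k) j).det
        ≤ CT * ε ^ (D + 1) + c₀ * ε ^ D := by
          rw [hmt]
          exact add_le_add_left (le_trans (le_abs_self _) hrest) _
      _ = c₀ * ε ^ D + CT * ε ^ (D + 1) := by ring
  refine ⟨min (1 / 2) (-c₀ / (2 * (CT + 1))), ?_, min_le_left _ _, ?_⟩
  · apply lt_min (by norm_num)
    apply div_pos (by linarith) (by linarith)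
  · set ε := min (1 / 2) (-c₀ / (2 * (CT + 1))) with hε
    have hε0 : 0 < ε := by
      apply lt_min (by norm_num)
      apply div_pos (by linarith) (by linarith)
    have hε2 : ε ≤ 1 / 2 := min_le_left _ _
    have h1 := hmain ε hε0 hε2
    have h2 : CT * ε ≤ -c₀ / 2 := by
      have hεle : ε ≤ -c₀ / (2 * (CT + 1)) := min_le_right _ _
      have hpos : (0 : ℝ) < -c₀ / (2 * (CT + 1)) := by
        apply div_pos (by linarith) (by linarith)
      calc CT * ε ≤ CT * (-c₀ / (2 * (CT + 1))) := mul_le_mul_of_nonneg_left hεle hCT0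
        _ ≤ (CT + 1) * (-c₀ / (2 * (CT + 1))) :=
            mul_le_mul_of_nonneg_right (by linarith) hpos.le
        _ = -c₀ / 2 := by
            field_simp
    have h3 : c₀ * ε ^ D + CT * ε ^ (D + 1) < 0 := by
      have hεD : 0 < ε ^ D := pow_pos hε0 D
      have heq : c₀ * ε ^ D + CT * ε ^ (D + 1) = (c₀ + CT * ε) * ε ^ D := by ring
      rw [heq]
      apply mul_neg_of_neg_of_pos _ hεD
      linarith
    linarith


private lemma key (n : ℕ) (hn : 1 ≤ n) (α : ℝ) (hα1 : (n : ℝ) - 1 < α) (hα2 : α < n) :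
    ∃ x y : Fin (n + 2) → ℝ, StrictMono x ∧ StrictMono y ∧
      (Matrix.of fun j k => pow0 (Omega (x j - y k)) α).det < 0 := by
  obtain ⟨ε, hε0, hε2, hdet⟩ := key2 n hn α hα1 hα2
  set m := n + 2 with hm
  have hu : ∀ (j k : Fin m), (0 : ℝ) < xv m j - yv ε m k := by
    intro j k
    have h1 : 1 ≤ xv m j := one_le_pow₀ one_le_two
    have h2 : yv ε m k ≤ ε :=
      pow_le_of_le_one hε0.le (by linarith) (by have := k.isLt; omega)
    have : yv ε m k ≤ 1 / 2 := le_trans h2 hε2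
    linarith
  refine ⟨xv m, yv ε m, ?_, ?_, ?_⟩
  · intro a b hab
    show (2 : ℝ) ^ (a : ℕ) < (2 : ℝ) ^ (b : ℕ)
    exact pow_lt_pow_right₀ one_lt_two hab
  · intro a b hab
    show ε ^ (m - (a : ℕ)) < ε ^ (m - (b : ℕ))
    apply pow_lt_pow_right_of_lt_one₀ hε0 (by linarith)
    have h1 : (a : ℕ) < (b : ℕ) := hab
    have := b.isLt
    omega
  · have hentry : (Matrix.of fun j k : Fin m => pow0 (Omega (xv m j - yv ε m k)) α)
        = Matrix.of fun j k : Fin m => Real.exp (-(α * xv m j)) *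
            (Real.exp (α * yv ε m k) * ((xv m j - yv ε m k) ^ α)) := by
      ext j k
      rw [Matrix.of_apply, Matrix.of_apply, Omega, if_pos (hu j k), pow0,
        if_neg (ne_of_gt (mul_pos (hu j k) (Real.exp_pos _))),
        Real.mul_rpow (hu j k).le (Real.exp_pos _).le,
        Real.rpow_def_of_pos (Real.exp_pos _), Real.log_exp]
      have hexp : Real.exp (-(xv m j - yv ε m k) * α)
          = Real.exp (-(α * xv m j)) * Real.exp (α * yv ε m k) := by
        rw [← Real.exp_add]
        congr 1
        ring
      rw [hexp]
      ring
    rw [hentry]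
    have h1 : (Matrix.of fun j k : Fin m => Real.exp (-(α * xv m j)) *
          (Real.exp (α * yv ε m k) * ((xv m j - yv ε m k) ^ α))).det
        = (∏ j : Fin m, Real.exp (-(α * xv m j))) *
          (Matrix.of fun j k : Fin m =>
            Real.exp (α * yv ε m k) * ((xv m j - yv ε m k) ^ α)).det :=
      Matrix.det_mul_column _ _
    have h2 : (Matrix.of fun j k : Fin m =>
          Real.exp (α * yv ε m k) * ((xv m j - yv ε m k) ^ α)).det
        = (∏ k : Fin m, Real.exp (α * yv ε m k)) *
          (Matrix.of fun j k : Fin m => (xv m j - yv ε m k) ^ α).det :=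
      Matrix.det_mul_row _ _
    have h3 : (Matrix.of fun j k : Fin m => (xv m j - yv ε m k) ^ α).det
        = (Matrix.of fun k j : Fin m => (xv m j - yv ε m k) ^ α).det :=
      Matrix.det_transpose (Matrix.of fun k j : Fin m => (xv m j - yv ε m k) ^ α)
    rw [h1, h2, h3]
    apply mul_neg_of_pos_of_neg (Finset.prod_pos fun _ _ => Real.exp_pos _)
    exact mul_neg_of_pos_of_neg (Finset.prod_pos fun _ _ => Real.exp_pos _) hdet

theorem stmt1 (p : ℕ) (hp : 2 ≤ p) (α : ℝ) (hα0 : 0 < α) (hα1 : α < (p : ℝ) - 2)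
    (hαZ : ∀ n : ℤ, α ≠ n) :
    ∃ r : ℕ, 1 ≤ r ∧ r ≤ p ∧ ∃ x y : Fin r → ℝ, StrictMono x ∧ StrictMono y ∧
      (Matrix.of fun j k => pow0 (Omega (x j - y k)) α).det < 0 := by
  have hn1 : 1 ≤ ⌈α⌉₊ := Nat.one_le_ceil_iff.mpr hα0
  have hup : α ≤ (⌈α⌉₊ : ℝ) := Nat.le_ceil α
  have hne : α ≠ (⌈α⌉₊ : ℝ) := by
    intro h
    exact hαZ (⌈α⌉₊ : ℤ) (by exact_mod_cast h)
  have hα2 : α < (⌈α⌉₊ : ℝ) := lt_of_le_of_ne hup hne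
  have hα1 : (⌈α⌉₊ : ℝ) - 1 < α := by
    have := Nat.ceil_lt_add_one hα0.le
    linarith
  have hnp : ⌈α⌉₊ + 2 ≤ p := by
    have hc : ((p - 2 : ℕ) : ℝ) = (p : ℝ) - 2 := by
      rw [Nat.cast_sub hp]
      norm_num
    have hcl : ⌈α⌉₊ ≤ p - 2 := Nat.ceil_le.mpr (by rw [hc]; linarith)
    omega
  obtain ⟨x, y, hx, hy, hdet⟩ := key ⌈α⌉₊ hn1 α hα1 hα2
  exact ⟨⌈α⌉₊ + 2, by omega, hnp, x, y, hx, hy, hdet⟩
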